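/- In any school choice problem with advantaged and marginalized students, there exists at least one marginalized student z ∈ Z who is unimprovable: every stable-dominating matching ν satisfies ν(z) = DA_z(P). -/

import Mathlib

/-!
A school choice problem: finitely many students `I` and schools `S`
(with a distinguished null school of quota `|I|`).  Each student `i` has a
strict preference over schools represented by its rank function
`rk i : S → ℕ` (a bijection onto `{1, …, |S|}`, where rank 1 is the most
preferred school); each school `s` has a quota `quota s ≥ 1` and a strict
priority over students represented by `prio s : I → ℕ`
(`i ▷_s j` iff `prio s i < prio s j`).
-/
structure SchoolChoice (I S : Type) [Fintype I] [Fintype S]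
    [DecidableEq I] [DecidableEq S] where
  nullSchool : S
  quota : S → ℕ
  rk : I → S → ℕ
  prio : S → I → ℕ
  quota_pos : ∀ s : S, 1 ≤ quota s
  quota_null : quota nullSchool = Fintype.card I
  rk_inj : ∀ i : I, Function.Injective (rk i)
  rk_mem : ∀ (i : I) (s : S), rk i s ∈ Finset.Icc 1 (Fintype.card S)
  prio_inj : ∀ s : S, Function.Injective (prio s)

namespace SchoolChoice

open scoped Classical

variable {I S : Type} [Fintype I] [Fintype S] [DecidableEq I] [DecidableEq S]

/-- `μ` is a matching: no school is assigned more students than its quota. -/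
def IsMatching (P : SchoolChoice I S) (μ : I → S) : Prop :=
  ∀ s : S, (Finset.univ.filter fun i => μ i = s).card ≤ P.quota s

/-- Given the sets `R i` of schools that have rejected student `i` so far,
student `i` proposes to her most preferred school that has not rejected her. -/
noncomputable def propose (P : SchoolChoice I S) (R : I → Finset S) (i : I) : S :=
  if h : (Finset.univ \ R i).Nonempty then
    (Finset.exists_min_image (Finset.univ \ R i) (P.rk i) h).choose
  else P.nullSchool

/-- At the DA round with rejection state `R`, school `s` rejects student `i`:
`i` applies to `s` and at least `quota s` applicants to `s` have higher priority. -/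
def rejectsAt (P : SchoolChoice I S) (R : I → Finset S) (s : S) (i : I) : Prop :=
  P.propose R i = s ∧
    P.quota s ≤ (Finset.univ.filter fun j =>
      P.propose R j = s ∧ P.prio s j < P.prio s i).card

/-- One round of student-proposing Deferred Acceptance: record new rejections. -/
noncomputable def stepR (P : SchoolChoice I S) (R : I → Finset S) : I → Finset S :=
  fun i => R i ∪ (Finset.univ.filter fun s => P.rejectsAt R s i)

/-- Rejection state after `n` rounds of Deferred Acceptance. -/
noncomputable def daR (P : SchoolChoice I S) : ℕ → I → Finset S
  | 0 => fun _ => (∅ : Finset S)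
  | n + 1 => P.stepR (P.daR n)

/-- The outcome of the student-proposing Deferred Acceptance algorithm:
iterate rounds until no rejection occurs (which happens within
`|I|·|S| + 1` rounds); each student is matched to the school holding her. -/
noncomputable def DA (P : SchoolChoice I S) : I → S :=
  P.propose (P.daR (Fintype.card I * Fintype.card S + 1))

/-- A matching `ν` is stable-dominating if every student weakly prefers
`ν` to the DA outcome. -/
def StableDominating (P : SchoolChoice I S) (ν : I → S) : Prop :=
  P.IsMatching ν ∧ ∀ i : I, P.rk i (ν i) ≤ P.rk i (P.DA i)

/-- Student `i` is unimprovable: every stable-dominating matching assigns `i`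
to her DA school. -/
def Unimprovable (P : SchoolChoice I S) (i : I) : Prop :=
  ∀ ν : I → S, P.StableDominating ν → ν i = P.DA i

/-- Edge of the envy digraph `G^DA(P)`: `i` prefers `j`'s DA school to her own. -/
def Envy (P : SchoolChoice I S) (i j : I) : Prop :=
  P.rk i (P.DA j) < P.rk i (P.DA i)

/-- Student `i` lies on a directed cycle of the envy digraph `G^DA(P)`. -/
def OnCycle (P : SchoolChoice I S) (i : I) : Prop :=
  ∃ (m : ℕ) (c : ℕ → I), 0 < m ∧ c 0 = i ∧ c m = i ∧
    ∀ k < m, P.Envy (c k) (c (k + 1))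

/-- Student `i` desires school `s` in matching `μ`. -/
def Desires (P : SchoolChoice I S) (μ : I → S) (i : I) (s : S) : Prop :=
  P.rk i s < P.rk i (μ i)

/-- `μ` is non-wasteful: every desired school is filled to quota. -/
def NonWasteful (P : SchoolChoice I S) (μ : I → S) : Prop :=
  ∀ s : S, (∃ i : I, P.Desires μ i s) →
    (Finset.univ.filter fun i => μ i = s).card = P.quota s

/-- `μ` is stable: a non-wasteful matching with no priority violations. -/
def Stable (P : SchoolChoice I S) (μ : I → S) : Prop :=
  P.IsMatching μ ∧ P.NonWasteful μ ∧
    ¬ ∃ (i j : I) (s : S), P.Desires μ i s ∧ μ j = s ∧ P.prio s i < P.prio s j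

/-- `μ` Pareto-dominates `ν`. -/
def ParetoDominates (P : SchoolChoice I S) (μ ν : I → S) : Prop :=
  (∀ i : I, P.rk i (μ i) ≤ P.rk i (ν i)) ∧ ∃ i : I, P.rk i (μ i) < P.rk i (ν i)

/-- `μ` is a Pareto-efficient matching. -/
def ParetoEfficient (P : SchoolChoice I S) (μ : I → S) : Prop :=
  P.IsMatching μ ∧ ∀ ν : I → S, P.IsMatching ν → ¬ P.ParetoDominates ν μ

end SchoolChoice
namespace SchoolChoice

open Finset
open scoped Classical

variable {I S : Type} [Fintype I] [Fintype S] [DecidableEq I] [DecidableEq S]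
  (P : SchoolChoice I S)

lemma propose_mem {R : I → Finset S} {i : I} (h : (Finset.univ \ R i).Nonempty) :
    P.propose R i ∈ Finset.univ \ R i := by
  unfold propose
  rw [dif_pos h]
  exact (Finset.exists_min_image (Finset.univ \ R i) (P.rk i) h).choose_spec.1

lemma propose_min {R : I → Finset S} {i : I} (h : (Finset.univ \ R i).Nonempty)
    {s : S} (hs : s ∉ R i) : P.rk i (P.propose R i) ≤ P.rk i s := by
  unfold propose
  rw [dif_pos h]
  exact (Finset.exists_min_image (Finset.univ \ R i) (P.rk i) h).choose_spec.2 s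
    (Finset.mem_sdiff.2 ⟨Finset.mem_univ _, hs⟩)

lemma rejectsAt_card_lt {R : I → Finset S} {s : S} {i : I} :
    (Finset.univ.filter fun j => P.propose R j = s ∧ P.prio s j < P.prio s i).card
      ≤ Fintype.card I - 1 := by
  have hsub : (Finset.univ.filter fun j => P.propose R j = s ∧ P.prio s j < P.prio s i)
      ⊆ Finset.univ.erase i := by
    intro j hj
    rw [Finset.mem_filter] at hj
    refine Finset.mem_erase.2 ⟨?_, Finset.mem_univ _⟩
    rintro rfl; exact lt_irrefl _ hj.2.2
  calc _ ≤ (Finset.univ.erase i).card := Finset.card_le_card hsub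
    _ = Fintype.card I - 1 := by rw [Finset.card_erase_of_mem (Finset.mem_univ _), Finset.card_univ]

lemma not_rejectsAt_null {R : I → Finset S} {i : I} : ¬ P.rejectsAt R P.nullSchool i := by
  rintro ⟨-, hcard⟩
  have h1 := P.rejectsAt_card_lt (R := R) (s := P.nullSchool) (i := i)
  have h2 : 1 ≤ Fintype.card I := Fintype.card_pos_iff.2 ⟨i⟩
  rw [P.quota_null] at hcard
  omega

lemma null_not_mem_daR (n : ℕ) (i : I) : P.nullSchool ∉ P.daR n i := by
  induction n with
  | zero => simp [daR]
  | succ n ih =>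
    simp only [daR, stepR, Finset.mem_union, Finset.mem_filter]
    rintro (h | ⟨-, h⟩)
    · exact ih h
    · exact P.not_rejectsAt_null h

lemma compl_daR_nonempty (n : ℕ) (i : I) : (Finset.univ \ P.daR n i).Nonempty :=
  ⟨P.nullSchool, Finset.mem_sdiff.2 ⟨Finset.mem_univ _, P.null_not_mem_daR n i⟩⟩

lemma proposeD_not_mem (n : ℕ) (i : I) : P.propose (P.daR n) i ∉ P.daR n i := by
  have := P.propose_mem (P.compl_daR_nonempty n i)
  exact (Finset.mem_sdiff.1 this).2

lemma daR_subset_succ (n : ℕ) (i : I) : P.daR n i ⊆ P.daR (n + 1) i := by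
  simp only [daR, stepR]; exact Finset.subset_union_left

lemma daR_subset {n m : ℕ} (h : n ≤ m) (i : I) : P.daR n i ⊆ P.daR m i := by
  induction m with
  | zero => simp_all
  | succ m ih =>
    rcases Nat.lt_or_ge n (m+1) with h' | h'
    · exact (ih (Nat.lt_succ_iff.1 h')).trans (P.daR_subset_succ m i)
    · have : n = m + 1 := le_antisymm h h'
      subst this; exact subset_rfl

lemma rk_propose_mono {n m : ℕ} (h : n ≤ m) (i : I) :
    P.rk i (P.propose (P.daR n) i) ≤ P.rk i (P.propose (P.daR m) i) := by
  refine P.propose_min (P.compl_daR_nonempty n i) ?_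
  intro hmem
  exact P.proposeD_not_mem m i (P.daR_subset h i hmem)

lemma step_eq_of_not_reject {R : I → Finset S} {i : I}
    (h : ¬ P.rejectsAt R (P.propose R i) i) : P.stepR R i = R i := by
  unfold stepR
  have : (Finset.univ.filter fun s => P.rejectsAt R s i) = ∅ := by
    refine Finset.filter_eq_empty_iff.2 ?_
    intro s _ hs
    exact h (hs.1 ▸ hs)
  rw [this, Finset.union_empty]

lemma reject_of_step_ne {n : ℕ} {i : I} (h : P.daR (n+1) i ≠ P.daR n i) :
    P.rejectsAt (P.daR n) (P.propose (P.daR n) i) i := by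
  by_contra hc
  exact h (P.step_eq_of_not_reject hc)

lemma mem_of_reject {n : ℕ} {s : S} {i : I} (h : P.rejectsAt (P.daR n) s i) :
    s ∈ P.daR (n+1) i := by
  show s ∈ P.stepR (P.daR n) i
  unfold stepR
  exact Finset.mem_union_right _ (Finset.mem_filter.2 ⟨Finset.mem_univ _, h⟩)

lemma extract_reject {m : ℕ} {s : S} {i : I} (h : s ∈ P.daR m i) :
    ∃ n, n < m ∧ P.rejectsAt (P.daR n) s i := by
  induction m with
  | zero => simp [daR] at h
  | succ m ih =>
    rcases Classical.em (s ∈ P.daR m i) with h' | h'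
    · obtain ⟨n, hn, hr⟩ := ih h'
      exact ⟨n, hn.trans (Nat.lt_succ_self m), hr⟩
    · refine ⟨m, Nat.lt_succ_self m, ?_⟩
      have : s ∈ P.stepR (P.daR m) i := h
      unfold stepR at this
      rcases Finset.mem_union.1 this with h'' | h''
      · exact absurd h'' h'
      · exact (Finset.mem_filter.1 h'').2

end SchoolChoice
namespace SchoolChoice

open Finset
open scoped Classical

variable {I S : Type} [Fintype I] [Fintype S] [DecidableEq I] [DecidableEq S]
  (P : SchoolChoice I S)

/-- number of rounds that suffices for DA to stabilize -/
noncomputable abbrev NN (I S : Type) [Fintype I] [Fintype S] : ℕ :=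
  Fintype.card I * Fintype.card S + 1

lemma exists_fixed : ∃ n < NN I S, P.daR (n+1) = P.daR n := by
  by_contra hc
  push_neg at hc
  set g : ℕ → ℕ := fun n => ∑ i : I, (P.daR n i).card with hg
  have hstep : ∀ n < NN I S, g n + 1 ≤ g (n+1) := by
    intro n hn
    have hne := hc n hn
    have : ∃ i, P.daR (n+1) i ≠ P.daR n i := by
      by_contra h
      push_neg at h
      exact hne (funext h)
    obtain ⟨i, hi⟩ := this
    have hlt : (P.daR n i).card < (P.daR (n+1) i).card :=
      Finset.card_lt_card (Finset.ssubset_iff_subset_ne.2 ⟨P.daR_subset_succ n i, fun h => hi h.symm⟩)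
    have hle : ∀ j : I, (P.daR n j).card ≤ (P.daR (n+1) j).card :=
      fun j => Finset.card_le_card (P.daR_subset_succ n j)
    have h3 := Finset.sum_lt_sum (fun j _ => hle j) ⟨i, Finset.mem_univ i, hlt⟩
    simp only [hg]
    omega
  have hlin : ∀ n ≤ NN I S, n ≤ g n := by
    intro n hn
    induction n with
    | zero => exact Nat.zero_le _
    | succ n ih =>
      have h1 := ih (Nat.le_of_succ_le hn)
      have h2 := hstep n (Nat.lt_of_succ_le hn)
      omega
  have hub : g (NN I S) ≤ Fintype.card I * Fintype.card S := by
    calc g (NN I S) ≤ ∑ _i : I, Fintype.card S :=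
          Finset.sum_le_sum (fun i _ => by
            simpa using Finset.card_le_card (Finset.subset_univ (P.daR (NN I S) i)))
      _ = Fintype.card I * Fintype.card S := by
          rw [Finset.sum_const, Finset.card_univ, smul_eq_mul]
  have := hlin (NN I S) le_rfl
  simp only [NN] at this hub
  omega

lemma daR_stab : ∀ m, NN I S ≤ m → P.daR m = P.daR (NN I S) := by
  obtain ⟨n, hn, hfix⟩ := P.exists_fixed
  have hstab : ∀ m, n ≤ m → P.daR m = P.daR n := by
    intro m hm
    induction m with
    | zero => simp_all
    | succ m ih =>
      rcases Nat.lt_or_ge n (m+1) with h' | h'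
      · have h2 := ih (Nat.lt_succ_iff.1 h')
        show P.stepR (P.daR m) = P.daR n
        rw [h2]
        exact hfix
      · exact le_antisymm h' hm ▸ rfl
  intro m hm
  rw [hstab m (hn.le.trans hm), hstab (NN I S) hn.le]

lemma reject_round_lt {n : ℕ} {i : I} (h : P.daR (n+1) i ≠ P.daR n i) : n < NN I S := by
  by_contra hc
  push_neg at hc
  have h1 := P.daR_stab n hc
  have h2 := P.daR_stab (n+1) (hc.trans (Nat.le_succ n))
  rw [h1, h2] at h
  exact h rfl

lemma DA_eq (m : ℕ) (hm : NN I S ≤ m) (i : I) : P.propose (P.daR m) i = P.DA i := by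
  show _ = P.propose (P.daR (NN I S)) i
  rw [P.daR_stab m hm]

lemma no_reject_final {s : S} {i : I} (m : ℕ) (hm : NN I S ≤ m) :
    ¬ P.rejectsAt (P.daR m) s i := by
  intro h
  have h1 : s ∈ P.daR (m+1) i := P.mem_of_reject h
  have h2 : s ∉ P.daR m i := by
    have := h.1 ▸ P.proposeD_not_mem m i
    exact this
  rw [P.daR_stab (m+1) (hm.trans (Nat.le_succ m)), P.daR_stab m hm] at *
  exact h2 h1

end SchoolChoice
namespace SchoolChoice

open Finset
open scoped Classical

variable {I S : Type} [Fintype I] [Fintype S] [DecidableEq I] [DecidableEq S]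
  (P : SchoolChoice I S)

/-- DA produces a matching. -/
lemma DA_isMatching : P.IsMatching P.DA := by
  intro s
  by_contra hc
  push_neg at hc
  have hne : (Finset.univ.filter fun i => P.DA i = s).Nonempty := by
    rw [← Finset.card_pos]
    have := P.quota_pos s
    omega
  obtain ⟨i, hi, hmax⟩ := Finset.exists_max_image _ (P.prio s) hne
  have hsub : (Finset.univ.filter fun i => P.DA i = s).erase i ⊆
      Finset.univ.filter fun j => P.propose (P.daR (NN I S)) j = s ∧ P.prio s j < P.prio s i := by
    intro j hj
    obtain ⟨hji, hj⟩ := Finset.mem_erase.1 hj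
    rw [Finset.mem_filter] at hj ⊢
    refine ⟨Finset.mem_univ _, hj.2, ?_⟩
    have hle := hmax j (Finset.mem_filter.2 hj)
    rcases lt_or_eq_of_le hle with h | h
    · exact h
    · exact absurd (P.prio_inj s h) hji
  have hcard : P.quota s ≤ ((Finset.univ.filter fun i => P.DA i = s).erase i).card := by
    rw [Finset.card_erase_of_mem hi]
    omega
  have hrej : P.rejectsAt (P.daR (NN I S)) s i :=
    ⟨(Finset.mem_filter.1 hi).2, hcard.trans (Finset.card_le_card hsub)⟩
  exact P.no_reject_final (NN I S) le_rfl hrej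

/-- rank-counting: at least `q` elements of `A` have fewer than `q` prio-predecessors in `A`. -/
lemma topq_card {s : S} {A : Finset I} {q : ℕ} (hq : q ≤ A.card) :
    q ≤ (A.filter fun j => (A.filter fun k => P.prio s k < P.prio s j).card < q).card := by
  set r : I → ℕ := fun j => (A.filter fun k => P.prio s k < P.prio s j).card with hr
  have hmono : ∀ j ∈ A, ∀ j' ∈ A, P.prio s j < P.prio s j' → r j < r j' := by
    intro j hj j' hj' hlt
    refine Finset.card_lt_card ?_
    rw [Finset.ssubset_iff_of_subset]
    · exact ⟨j, Finset.mem_filter.2 ⟨hj, hlt⟩, fun h => lt_irrefl _ (Finset.mem_filter.1 h).2⟩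
    · intro k hk
      rw [Finset.mem_filter] at hk ⊢
      exact ⟨hk.1, hk.2.trans hlt⟩
  have hinj : ∀ j ∈ A, ∀ j' ∈ A, j ≠ j' → r j ≠ r j' := by
    intro j hj j' hj' hne
    have : P.prio s j ≠ P.prio s j' := fun h => hne (P.prio_inj s h)
    rcases lt_or_gt_of_ne this with h | h
    · exact Nat.ne_of_lt (hmono j hj j' hj' h)
    · exact (Nat.ne_of_lt (hmono j' hj' j hj h)).symm
  have hub : ∀ j ∈ A, r j < A.card := by
    intro j hj
    have : A.filter (fun k => P.prio s k < P.prio s j) ⊆ A.erase j := by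
      intro k hk
      rw [Finset.mem_filter] at hk
      exact Finset.mem_erase.2 ⟨fun h => lt_irrefl _ (h ▸ hk.2), hk.1⟩
    calc r j ≤ (A.erase j).card := Finset.card_le_card this
      _ < A.card := by rw [Finset.card_erase_of_mem hj]; have := Finset.card_pos.2 ⟨j, hj⟩; omega
  -- bad set injects into Ico q A.card
  have hbad : (A.filter fun j => ¬ r j < q).card ≤ A.card - q := by
    have : (A.filter fun j => ¬ r j < q).card ≤ (Finset.Ico q A.card).card := by
      apply Finset.card_le_card_of_injOn r
      · intro j hj
        rw [Finset.mem_coe, Finset.mem_filter] at hj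
        exact Finset.mem_Ico.2 ⟨Nat.le_of_not_lt hj.2, hub j hj.1⟩
      · intro j hj j' hj' hrr
        by_contra hne
        exact hinj j (Finset.mem_filter.1 hj).1 j' (Finset.mem_filter.1 hj').1 hne hrr
    rwa [Nat.card_Ico] at this
  have hsplit := Finset.card_filter_add_card_filter_not (s := A)
    (p := fun j => r j < q)
  have hgoal : q ≤ (A.filter fun j => r j < q).card := by omega
  exact hgoal

lemma propose_congr {R R' : I → Finset S} {i : I} (h : R i = R' i) :
    P.propose R i = P.propose R' i := by
  exact congrArg (fun t : Finset S => if h : (Finset.univ \ t).Nonempty then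
    (Finset.exists_min_image (Finset.univ \ t) (P.rk i) h).choose else P.nullSchool) h

/-- one-step preservation of the cutoff invariant -/
lemma inv_step {s : S} {c : ℕ} {n : ℕ}
    (h : P.quota s ≤ (Finset.univ.filter fun j =>
        P.propose (P.daR n) j = s ∧ P.prio s j < c).card) :
    P.quota s ≤ (Finset.univ.filter fun j =>
        P.propose (P.daR (n+1)) j = s ∧ P.prio s j < c).card := by
  have hAcard : P.quota s ≤ (Finset.univ.filter fun j => P.propose (P.daR n) j = s).card := by
    refine h.trans (Finset.card_le_card ?_)
    intro j hj
    rw [Finset.mem_filter] at hj ⊢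
    exact ⟨hj.1, hj.2.1⟩
  have hDcard := P.topq_card (s := s) hAcard
  refine hDcard.trans (Finset.card_le_card ?_)
  intro j hj
  rw [Finset.mem_filter, Finset.mem_filter] at hj
  obtain ⟨⟨-, hjs⟩, hjr⟩ := hj
  have hff : ∀ x : I, ((Finset.univ.filter fun j => P.propose (P.daR n) j = s).filter
      fun k => P.prio s k < P.prio s x) =
      Finset.univ.filter fun k => P.propose (P.daR n) k = s ∧ P.prio s k < P.prio s x :=
    fun x => Finset.filter_filter _ _ _
  rw [hff] at hjr
  -- prio j < c
  have hjc : P.prio s j < c := by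
    by_contra hge
    push_neg at hge
    have hbig : P.quota s ≤ (Finset.univ.filter fun k =>
        P.propose (P.daR n) k = s ∧ P.prio s k < P.prio s j).card := by
      refine h.trans (Finset.card_le_card ?_)
      intro k hk
      rw [Finset.mem_filter] at hk ⊢
      exact ⟨Finset.mem_univ _, hk.2.1, hk.2.2.trans_le hge⟩
    omega
  -- j is not rejected
  have hnr : ¬ P.rejectsAt (P.daR n) (P.propose (P.daR n) j) j := by
    rintro ⟨-, hcard⟩
    rw [hjs] at hcard
    omega
  have hstep : P.daR (n+1) j = P.daR n j := P.step_eq_of_not_reject hnr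
  rw [Finset.mem_filter]
  exact ⟨Finset.mem_univ _, (P.propose_congr hstep).trans hjs, hjc⟩

lemma inv_propagate {s : S} {c : ℕ} {n m : ℕ} (hnm : n ≤ m)
    (h : P.quota s ≤ (Finset.univ.filter fun j =>
        P.propose (P.daR n) j = s ∧ P.prio s j < c).card) :
    P.quota s ≤ (Finset.univ.filter fun j =>
        P.propose (P.daR m) j = s ∧ P.prio s j < c).card := by
  induction m with
  | zero => rw [Nat.le_zero] at hnm; subst hnm; exact h
  | succ m ih =>
    rcases Nat.lt_or_ge n (m+1) with h' | h'
    · exact P.inv_step (ih (Nat.lt_succ_iff.1 h'))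
    · have : n = m + 1 := le_antisymm hnm h'
      subst this; exact h

/-- Key consequence: if `i` is ever rejected by `s`, then at DA, `s` is full
and every DA-student of `s` beats `i`. -/
lemma rejected_full {s : S} {i : I} {n : ℕ} (h : P.rejectsAt (P.daR n) s i) :
    (Finset.univ.filter fun j => P.DA j = s).card = P.quota s ∧
      ∀ j, P.DA j = s → P.prio s j < P.prio s i := by
  have hinv := P.inv_propagate (Nat.le_max_left n (NN I S)) h.2
  have hDA : ∀ j : I, P.propose (P.daR (Nat.max n (NN I S))) j = P.DA j :=
    fun j => P.DA_eq _ (Nat.le_max_right _ _) j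
  have hB : P.quota s ≤ (Finset.univ.filter fun j =>
      P.DA j = s ∧ P.prio s j < P.prio s i).card := by
    refine hinv.trans (Finset.card_le_card ?_)
    intro j hj
    rw [Finset.mem_filter] at hj ⊢
    exact ⟨Finset.mem_univ _, (hDA j) ▸ hj.2.1, hj.2.2⟩
  have hsub : (Finset.univ.filter fun j => P.DA j = s ∧ P.prio s j < P.prio s i) ⊆
      Finset.univ.filter fun j => P.DA j = s := by
    intro j hj
    rw [Finset.mem_filter] at hj ⊢
    exact ⟨Finset.mem_univ _, hj.2.1⟩
  have hA := P.DA_isMatching s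
  have heq : (Finset.univ.filter fun j => P.DA j = s ∧ P.prio s j < P.prio s i) =
      Finset.univ.filter fun j => P.DA j = s := by
    apply Finset.eq_of_subset_of_card_le hsub
    calc (Finset.univ.filter fun j => P.DA j = s).card ≤ P.quota s := hA
      _ ≤ _ := hB
  constructor
  · have hcc := congrArg Finset.card heq
    have h1 : (Finset.univ.filter fun j => P.DA j = s).card ≤ P.quota s := hA
    omega
  · intro j hj
    have : j ∈ Finset.univ.filter fun j => P.DA j = s :=
      Finset.mem_filter.2 ⟨Finset.mem_univ _, hj⟩
    rw [← heq, Finset.mem_filter] at this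
    exact this.2.2

/-- If `i` desires `s` at DA, then `s` has rejected `i` at some round. -/
lemma desires_rejected {s : S} {i : I} (h : P.rk i s < P.rk i (P.DA i)) :
    ∃ n, P.rejectsAt (P.daR n) s i := by
  have hmem : s ∈ P.daR (NN I S) i := by
    by_contra hc
    have := P.propose_min (P.compl_daR_nonempty (NN I S) i) hc
    rw [P.DA_eq (NN I S) le_rfl i] at this
    omega
  obtain ⟨n, -, hn⟩ := P.extract_reject hmem
  exact ⟨n, hn⟩

end SchoolChoice
namespace SchoolChoice

open Finset
open scoped Classical

variable {I S : Type} [Fintype I] [Fintype S] [DecidableEq I] [DecidableEq S]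
  (P : SchoolChoice I S)

noncomputable def rejSet (i : I) : Finset ℕ :=
  (Finset.range (NN I S)).filter (fun n => P.daR (n+1) i ≠ P.daR n i)

noncomputable def lastRej (i : I) : ℕ := (P.rejSet i).sup id

lemma mem_rejSet {n : ℕ} {i : I} (h : P.daR (n+1) i ≠ P.daR n i) : n ∈ P.rejSet i :=
  Finset.mem_filter.2 ⟨Finset.mem_range.2 (P.reject_round_lt h), h⟩

lemma le_lastRej {n : ℕ} {i : I} (h : P.daR (n+1) i ≠ P.daR n i) : n ≤ P.lastRej i :=
  Finset.le_sup (f := id) (P.mem_rejSet h)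

lemma rejectsAt_ne {n : ℕ} {s : S} {i : I} (h : P.rejectsAt (P.daR n) s i) :
    P.daR (n+1) i ≠ P.daR n i := by
  intro he
  have h1 : s ∈ P.daR (n+1) i := P.mem_of_reject h
  have h2 : s ∉ P.daR n i := h.1 ▸ P.proposeD_not_mem n i
  rw [he] at h1
  exact h2 h1

lemma lastRej_mem {i : I} (h : (P.rejSet i).Nonempty) : P.lastRej i ∈ P.rejSet i := by
  have h1 : P.lastRej i = (P.rejSet i).max' h := by
    apply le_antisymm
    · exact Finset.sup_le fun b hb => Finset.le_max' _ b hb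
    · exact Finset.le_sup (f := id) (Finset.max'_mem _ h)
  rw [h1]
  exact Finset.max'_mem _ h

/-- before (and including) her last rejection round, a student does not yet
propose to her final DA school -/
lemma propose_ne_before_last {i : I} (h : (P.rejSet i).Nonempty) {n : ℕ}
    (hn : n ≤ P.lastRej i) : P.propose (P.daR n) i ≠ P.DA i := by
  have hmem := P.lastRej_mem h
  rw [rejSet, Finset.mem_filter, Finset.mem_range] at hmem
  obtain ⟨hlt, hchg⟩ := hmem
  have hrej := P.reject_of_step_ne hchg
  have hs0mem : P.propose (P.daR (P.lastRej i)) i ∈ P.daR (NN I S) i := by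
    have h1 := P.mem_of_reject hrej
    exact P.daR_subset (by omega) i h1
  have hs0ne : P.propose (P.daR (P.lastRej i)) i ≠ P.DA i := by
    intro he
    have : P.DA i ∉ P.daR (NN I S) i := P.proposeD_not_mem (NN I S) i
    rw [he] at hs0mem
    exact this hs0mem
  have hrk1 : P.rk i (P.propose (P.daR (P.lastRej i)) i) ≤ P.rk i (P.DA i) := by
    have := P.rk_propose_mono (i := i) (n := P.lastRej i) (m := NN I S) (by omega)
    rwa [P.DA_eq (NN I S) le_rfl i] at this
  have hrk2 : P.rk i (P.propose (P.daR (P.lastRej i)) i) < P.rk i (P.DA i) :=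
    lt_of_le_of_ne hrk1 (fun he => hs0ne (P.rk_inj i he))
  have hrk3 : P.rk i (P.propose (P.daR n) i) ≤ P.rk i (P.propose (P.daR (P.lastRej i)) i) :=
    P.rk_propose_mono hn i
  intro he
  rw [he] at hrk3
  omega

end SchoolChoice
namespace SchoolChoice

open Finset
open scoped Classical

variable {I S : Type} [Fintype I] [Fintype S] [DecidableEq I] [DecidableEq S]
  (P : SchoolChoice I S)

/-- If a stable-dominating matching moves `z`, some other moved student
takes a seat at `z`'s DA school. -/
lemma exists_entrant {ν : I → S} (hνm : P.IsMatching ν)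
    (hdom : ∀ i, P.rk i (ν i) ≤ P.rk i (P.DA i)) {z : I} (hz : ν z ≠ P.DA z) :
    ∃ t, ν t ≠ P.DA t ∧ ν t = P.DA z ∧ t ≠ z := by
  have hdes : ∀ i, ν i ≠ P.DA i → P.rk i (ν i) < P.rk i (P.DA i) := fun i h =>
    lt_of_le_of_ne (hdom i) (fun he => h (P.rk_inj i he))
  set T := Finset.univ.filter (fun i => ν i ≠ P.DA i) with hT
  have hsum1 : T.card = ∑ s : S, (T.filter fun i => ν i = s).card :=
    Finset.card_eq_sum_card_fiberwise (fun i _ => Finset.mem_univ (ν i))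
  have hsum2 : T.card = ∑ s : S, (T.filter fun i => P.DA i = s).card :=
    Finset.card_eq_sum_card_fiberwise (fun i _ => Finset.mem_univ (P.DA i))
  have hle : ∀ s : S, (T.filter fun i => ν i = s).card ≤ (T.filter fun i => P.DA i = s).card := by
    intro s
    rcases Nat.eq_zero_or_pos (T.filter fun i => ν i = s).card with h0 | h0
    · omega
    · obtain ⟨t, ht⟩ := Finset.card_pos.1 h0
      rw [Finset.mem_filter, hT, Finset.mem_filter] at ht
      obtain ⟨⟨-, htne⟩, hts⟩ := ht
      have htdes : P.rk t s < P.rk t (P.DA t) := hts ▸ hdes t htne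
      obtain ⟨n, hrej⟩ := P.desires_rejected htdes
      have hfull := (P.rejected_full hrej).1
      have hsplitν := Finset.card_filter_add_card_filter_not
        (s := Finset.univ.filter fun i => ν i = s) (p := fun i => ν i = P.DA i)
      have hsplitD := Finset.card_filter_add_card_filter_not
        (s := Finset.univ.filter fun i => P.DA i = s) (p := fun i => ν i = P.DA i)
      have he : ((Finset.univ.filter fun i => ν i = s).filter fun i => ν i = P.DA i) =
          ((Finset.univ.filter fun i => P.DA i = s).filter fun i => ν i = P.DA i) := by
        ext i
        simp only [Finset.mem_filter, Finset.mem_univ, true_and]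
        constructor
        · rintro ⟨h1, h2⟩; exact ⟨h2 ▸ h1, h2⟩
        · rintro ⟨h1, h2⟩; refine ⟨?_, h2⟩; rw [h2, h1]
      have heν : (T.filter fun i => ν i = s) =
          ((Finset.univ.filter fun i => ν i = s).filter fun i => ¬ ν i = P.DA i) := by
        ext i
        simp only [hT, Finset.mem_filter, Finset.mem_univ, true_and]
        tauto
      have heD : (T.filter fun i => P.DA i = s) =
          ((Finset.univ.filter fun i => P.DA i = s).filter fun i => ¬ ν i = P.DA i) := by
        ext i
        simp only [hT, Finset.mem_filter, Finset.mem_univ, true_and]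
        tauto
      have hν1 : (Finset.univ.filter fun i => ν i = s).card ≤ P.quota s := hνm s
      have hcc := congrArg Finset.card he
      rw [heν, heD]
      omega
  have hpoint := (Finset.sum_eq_sum_iff_of_le (fun s _ => hle s)).1 (by rw [← hsum1, ← hsum2])
  have hzmem : z ∈ T.filter fun i => P.DA i = P.DA z := by
    rw [Finset.mem_filter, hT, Finset.mem_filter]
    exact ⟨⟨Finset.mem_univ _, hz⟩, rfl⟩
  have hzpos : 0 < (T.filter fun i => P.DA i = P.DA z).card := Finset.card_pos.2 ⟨z, hzmem⟩
  have hpt := hpoint (P.DA z) (Finset.mem_univ _)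
  have hνpos : 0 < (T.filter fun i => ν i = P.DA z).card := by omega
  obtain ⟨t, ht⟩ := Finset.card_pos.1 hνpos
  rw [Finset.mem_filter, hT, Finset.mem_filter] at ht
  refine ⟨t, ht.1.2, ht.2, ?_⟩
  rintro rfl
  exact ht.1.2 ht.2

end SchoolChoice

/-- In any school choice problem whose students are partitioned
into nonempty sets `Y` (advantaged) and `Z` (marginalized), with every
advantaged student having higher priority than every marginalized student at
every school, there is at least one marginalized student who is unimprovable. -/
theorem exists_unimprovable_marginalized {I S : Type} [Fintype I] [Fintype S]
    [DecidableEq I] [DecidableEq S] (P : SchoolChoice I S)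
    (Y Z : Finset I) (hY : Y.Nonempty) (hZ : Z.Nonempty)
    (hdisj : Disjoint Y Z) (hcover : Y ∪ Z = Finset.univ)
    (hprio : ∀ s : S, ∀ y ∈ Y, ∀ z ∈ Z, P.prio s y < P.prio s z) :
    ∃ z ∈ Z, P.Unimprovable z := by
  classical
  open SchoolChoice Finset in
  obtain ⟨zs, hzsZ, hzsmax⟩ := Finset.exists_max_image Z (fun z => P.lastRej z) hZ
  refine ⟨zs, hzsZ, ?_⟩
  intro ν hν
  by_contra hne
  obtain ⟨hνm, hνdom⟩ := hν
  obtain ⟨t, htne, hts, htz⟩ := P.exists_entrant hνm hνdom hne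
  have htdes : P.rk t (P.DA zs) < P.rk t (P.DA t) := by
    have h1 := lt_of_le_of_ne (hνdom t) (fun he => htne (P.rk_inj t he))
    rwa [hts] at h1
  obtain ⟨nt, hrejt⟩ := P.desires_rejected htdes
  have hzbeat : P.prio (P.DA zs) zs < P.prio (P.DA zs) t := (P.rejected_full hrejt).2 zs rfl
  have hmemYZ : ∀ i : I, i ∈ Y ∨ i ∈ Z := by
    intro i
    have h1 : i ∈ Y ∪ Z := hcover ▸ Finset.mem_univ i
    exact Finset.mem_union.1 h1
  have htZ : t ∈ Z := by
    rcases hmemYZ t with h | h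
    · exact absurd (hprio (P.DA zs) t h zs hzsZ) (by omega)
    · exact h
  have hnoY : ∀ (n : ℕ) (y : I), y ∈ Y → ¬ P.rejectsAt (P.daR n) (P.DA zs) y := by
    intro n y hy hr
    have h1 := (P.rejected_full hr).2 zs rfl
    have h2 := hprio (P.DA zs) y hy zs hzsZ
    omega
  set RS := (Finset.range (NN I S)).filter
      (fun n => ∃ w ∈ Z, P.rejectsAt (P.daR n) (P.DA zs) w) with hRS
  have hntRS : nt ∈ RS := by
    rw [hRS, Finset.mem_filter, Finset.mem_range]
    exact ⟨P.reject_round_lt (P.rejectsAt_ne hrejt), t, htZ, hrejt⟩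
  have hRSne : RS.Nonempty := ⟨nt, hntRS⟩
  set a := RS.max' hRSne with ha
  have haRS : a ∈ RS := Finset.max'_mem RS hRSne
  rw [hRS, Finset.mem_filter] at haRS
  obtain ⟨-, w, hwZ, hw⟩ := haRS
  have hub : ∀ (n : ℕ) (u : I), u ∈ Z → P.rejectsAt (P.daR n) (P.DA zs) u → n ≤ a := by
    intro n u huZ hr
    refine Finset.le_max' _ _ ?_
    rw [hRS, Finset.mem_filter, Finset.mem_range]
    exact ⟨P.reject_round_lt (P.rejectsAt_ne hr), u, huZ, hr⟩
  have hal : a ≤ P.lastRej zs :=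
    le_trans (P.le_lastRej (P.rejectsAt_ne hw)) (hzsmax w hwZ)
  set q := P.quota (P.DA zs) with hq
  set Prp := Finset.univ.filter (fun j => P.propose (P.daR a) j = P.DA zs) with hPrp
  have hPcard : q ≤ Prp.card := by
    refine hw.2.trans (Finset.card_le_card ?_)
    intro j hj
    rw [Finset.mem_filter] at hj
    rw [hPrp, Finset.mem_filter]
    exact ⟨Finset.mem_univ _, hj.2.1⟩
  have hD := P.topq_card (s := P.DA zs) hPcard
  have hDsub : (Prp.filter fun j =>
      (Prp.filter fun k => P.prio (P.DA zs) k < P.prio (P.DA zs) j).card < q) ⊆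
      Finset.univ.filter (fun j => P.DA j = P.DA zs) := by
    intro j hj
    rw [Finset.mem_filter, hPrp, Finset.mem_filter] at hj
    obtain ⟨⟨-, hjs⟩, hjcnt⟩ := hj
    have hstep : ∀ m, a ≤ m → P.propose (P.daR m) j = P.DA zs := by
      intro m hm
      induction m, hm using Nat.le_induction with
      | base => exact hjs
      | succ m hm ih =>
        have hnr : ¬ P.rejectsAt (P.daR m) (P.DA zs) j := by
          intro hr
          rcases hmemYZ j with hYj | hZj
          · exact hnoY m j hYj hr
          · have hma := hub m j hZj hr
            have hm' : m = a := le_antisymm hma hm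
            subst hm'
            have hcard := hr.2
            have hff : (Prp.filter fun k => P.prio (P.DA zs) k < P.prio (P.DA zs) j) =
                Finset.univ.filter (fun k => P.propose (P.daR a) k = P.DA zs ∧
                  P.prio (P.DA zs) k < P.prio (P.DA zs) j) := by
              rw [hPrp, Finset.filter_filter]
            rw [hff] at hjcnt
            omega
        have hnr' : ¬ P.rejectsAt (P.daR m) (P.propose (P.daR m) j) j := by
          rw [ih]; exact hnr
        exact (P.propose_congr (P.step_eq_of_not_reject hnr')).trans ih
    have hfin := hstep (Nat.max a (NN I S)) (Nat.le_max_left _ _)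
    rw [P.DA_eq _ (Nat.le_max_right _ _) j] at hfin
    exact Finset.mem_filter.2 ⟨Finset.mem_univ _, hfin⟩
  have hAle : (Finset.univ.filter (fun j => P.DA j = P.DA zs)).card ≤ q := P.DA_isMatching _
  have hEq := Finset.eq_of_subset_of_card_le hDsub (hAle.trans hD)
  have hzsmem : zs ∈ Finset.univ.filter (fun j => P.DA j = P.DA zs) :=
    Finset.mem_filter.2 ⟨Finset.mem_univ _, rfl⟩
  rw [← hEq] at hzsmem
  rw [Finset.mem_filter, hPrp, Finset.mem_filter] at hzsmem
  have hprop : P.propose (P.daR a) zs = P.DA zs := hzsmem.1.2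
  have hzsrej : (P.rejSet zs).Nonempty := by
    have hzdes : P.rk zs (ν zs) < P.rk zs (P.DA zs) :=
      lt_of_le_of_ne (hνdom zs) (fun he => hne (P.rk_inj zs he))
    obtain ⟨n0, hr0⟩ := P.desires_rejected hzdes
    exact ⟨n0, P.mem_rejSet (P.rejectsAt_ne hr0)⟩
  exact P.propose_ne_before_last hzsrej hal hprop
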